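/- Let c > 0 and s > 0 be real constants and let (x_t)_{t≥1}, (y_t)_{t≥0} satisfy y_0 > max(c − s, 0), y_{t+1} = c·y_t/(s + y_t), and x_{t+1} = c·s/(s + y_t) for all t ≥ 0. Then x_t + y_t = c for every t ≥ 1, and the sequence (x_t) converges to min(c, s). -/

import Mathlib

open Filter

theorem stmt14 (c s : ℝ) (hc : 0 < c) (hs : 0 < s)
    (x y : ℕ → ℝ) (hy0 : max (c - s) 0 < y 0)
    (hyrec : ∀ t : ℕ, y (t+1) = c * y t / (s + y t))
    (hxrec : ∀ t : ℕ, x (t+1) = c * s / (s + y t)) :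
    (∀ t : ℕ, 1 ≤ t → x t + y t = c) ∧ Tendsto x atTop (nhds (min c s)) := by
  -- invariant
  have hinv : ∀ t, max (c - s) 0 < y t := by
    intro t
    induction t with
    | zero => exact hy0
    | succ n ih =>
      have hyn : 0 < y n := lt_of_le_of_lt (le_max_right _ _) ih
      have hycs : c - s < y n := lt_of_le_of_lt (le_max_left _ _) ih
      have hden : 0 < s + y n := by linarith
      rw [hyrec n, max_lt_iff]
      constructor
      · rw [lt_div_iff₀ hden]; nlinarith
      · positivity
  have hypos : ∀ t, 0 < y t := fun t => lt_of_le_of_lt (le_max_right _ _) (hinv t)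
  have hden : ∀ t, 0 < s + y t := fun t => by have := hypos t; linarith
  have part1 : ∀ t : ℕ, 1 ≤ t → x t + y t = c := by
    intro t ht
    obtain ⟨n, rfl⟩ := Nat.exists_eq_add_of_le ht
    simp only [Nat.add_comm 1 n]
    rw [hxrec n, hyrec n, ← add_div, ← mul_add, mul_div_assoc,
      div_self (hden n).ne', mul_one]
  -- antitone
  have hanti : Antitone y := by
    apply antitone_nat_of_succ_le
    intro n
    have h1 := hypos n
    have h2 := lt_of_le_of_lt (le_max_left _ _) (hinv n)
    rw [hyrec n, div_le_iff₀ (hden n)]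
    nlinarith
  have hbdd : BddBelow (Set.range y) := ⟨0, by rintro _ ⟨t, rfl⟩; exact (hypos t).le⟩
  set L : ℝ := ⨅ t, y t with hLdef
  have hLy : Tendsto y atTop (nhds L) := tendsto_atTop_ciInf hanti hbdd
  have hLge : max (c - s) 0 ≤ L := le_ciInf fun t => (hinv t).le
  have hL0 : 0 ≤ L := le_trans (le_max_right _ _) hLge
  have hsL : 0 < s + L := by linarith
  have hL1 : Tendsto (fun t => y (t + 1)) atTop (nhds L) :=
    (tendsto_add_atTop_iff_nat 1).2 hLy
  have hL2 : Tendsto (fun t => c * y t / (s + y t)) atTop (nhds (c * L / (s + L))) :=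
    (tendsto_const_nhds.mul hLy).div (tendsto_const_nhds.add hLy) hsL.ne'
  have hLeq : L = c * L / (s + L) := by
    refine tendsto_nhds_unique hL1 ?_
    simpa only [← hyrec] using hL2
  have hLfix : L * (s + L - c) = 0 := by
    field_simp at hLeq; nlinarith [hLeq]
  -- x limit
  have hx1 : Tendsto (fun t => x (t + 1)) atTop (nhds (c * s / (s + L))) := by
    have : Tendsto (fun t => c * s / (s + y t)) atTop (nhds (c * s / (s + L))) :=
      tendsto_const_nhds.div (tendsto_const_nhds.add hLy) hsL.ne'
    simpa only [← hxrec] using this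
  have hval : c * s / (s + L) = min c s := by
    rcases le_or_gt c s with hcs | hcs
    · have hL : L = 0 := by
        rcases mul_eq_zero.1 hLfix with h | h
        · exact h
        · have : L = c - s := by linarith
          have : L ≤ 0 := by linarith
          linarith
      rw [hL, min_eq_left hcs]
      field_simp
      ring
    · have hL : L = c - s := by
        have hLpos : 0 < L := lt_of_lt_of_le (lt_max_iff.2 (Or.inl (by linarith))) hLge
        rcases mul_eq_zero.1 hLfix with h | h
        · linarith
        · linarith
      rw [hL, min_eq_right hcs.le]
      have : s + (c - s) = c := by ring
      rw [this]
      field_simp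
  refine ⟨part1, ?_⟩
  rw [← tendsto_add_atTop_iff_nat 1]
  rw [← hval]
  exact hx1
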